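/- Let A, B be d×d complex matrices and n ≥ 2, and let M be the nd×nd block matrix with B in every diagonal block and A in every off-diagonal block. Then the spectral norm (largest singular value) of M equals max(‖B + (n−1)A‖₂, ‖B − A‖₂), provided A and B are simultaneously such that M is normal (e.g. A, B Hermitian). -/

import Mathlib

open Matrix

private lemma aux_ensq {ι : Type*} [Fintype ι] (y : EuclideanSpace ℂ ι) :
    ‖y‖ ^ 2 = ∑ i, ‖y i‖ ^ 2 := by
  rw [EuclideanSpace.norm_eq, Real.sq_sqrt (by positivity)]

private lemma aux_inner_zero {n d : ℕ} (U V : EuclideanSpace ℂ (Fin n × Fin d))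
    (g : Fin d → ℂ) (hU : ∀ i a, U (i, a) = g a)
    (hV : ∀ a, ∑ i, V (i, a) = 0) : (inner ℂ U V : ℂ) = 0 := by
  rw [PiLp.inner_apply]
  simp only [RCLike.inner_apply]
  rw [Fintype.sum_prod_type, Finset.sum_comm]
  refine Finset.sum_eq_zero fun a _ => ?_
  simp_rw [hU]
  rw [← Finset.sum_mul, hV, zero_mul]

private lemma aux_const_sq {n d : ℕ} (z : EuclideanSpace ℂ (Fin n × Fin d))
    (g : EuclideanSpace ℂ (Fin d)) (hz : ∀ i a, z (i, a) = g a) :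
    ‖z‖ ^ 2 = n * ‖g‖ ^ 2 := by
  rw [aux_ensq, Fintype.sum_prod_type, aux_ensq g]
  simp_rw [hz]
  simp [Finset.sum_const]

private lemma aux_slice_sq {n d : ℕ} (z : EuclideanSpace ℂ (Fin n × Fin d))
    (g : Fin n → EuclideanSpace ℂ (Fin d)) (hz : ∀ i a, z (i, a) = g i a) :
    ‖z‖ ^ 2 = ∑ i, ‖g i‖ ^ 2 := by
  rw [aux_ensq, Fintype.sum_prod_type]
  refine Finset.sum_congr rfl fun i _ => ?_
  rw [aux_ensq (g i)]
  exact Finset.sum_congr rfl fun a _ => by rw [hz]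

private lemma aux_two_sq {n d : ℕ} (i0 i1 : Fin n) (h : i0 ≠ i1)
    (g : EuclideanSpace ℂ (Fin d)) (z : EuclideanSpace ℂ (Fin n × Fin d))
    (hz : ∀ i a, z (i, a) = (if i = i0 then g a else 0) - (if i = i1 then g a else 0)) :
    ‖z‖ ^ 2 = 2 * ‖g‖ ^ 2 := by
  rw [aux_ensq, Fintype.sum_prod_type]
  have hrow : ∀ i : Fin n, (∑ a, ‖z (i, a)‖ ^ 2) =
      (if i = i0 then ‖g‖ ^ 2 else 0) + (if i = i1 then ‖g‖ ^ 2 else 0) := by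
    intro i
    by_cases h0 : i = i0
    · subst h0
      simp [hz, h, aux_ensq g]
    · by_cases h1 : i = i1
      · subst h1
        simp [hz, h0, aux_ensq g]
      · simp [hz, h0, h1]
  simp_rw [hrow]
  rw [Finset.sum_add_distrib, Finset.sum_ite_eq' Finset.univ i0 (fun _ => ‖g‖ ^ 2),
    Finset.sum_ite_eq' Finset.univ i1 (fun _ => ‖g‖ ^ 2)]
  simp
  ring

theorem stmt_12 (d n : ℕ) (hn : 2 ≤ n) (A B : Matrix (Fin d) (Fin d) ℂ)
    (M : Matrix (Fin n × Fin d) (Fin n × Fin d) ℂ)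
    (hM : ∀ i j : Fin n, ∀ a b : Fin d,
      M (i, a) (j, b) = if i = j then B a b else A a b)
    (hnormal : IsStarNormal M) :
    ‖Matrix.toEuclideanCLM (𝕜 := ℂ) M‖ =
      max ‖Matrix.toEuclideanCLM (𝕜 := ℂ) (B + ((n : ℂ) - 1) • A)‖
        ‖Matrix.toEuclideanCLM (𝕜 := ℂ) (B - A)‖ := by
  have hnpos : 0 < n := by omega
  have hnC : (n : ℂ) ≠ 0 := Nat.cast_ne_zero.mpr (by omega)
  set P : Matrix (Fin d) (Fin d) ℂ := B + ((n : ℂ) - 1) • A with hPdef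
  set Q : Matrix (Fin d) (Fin d) ℂ := B - A with hQdef
  set T := Matrix.toEuclideanCLM (𝕜 := ℂ) M with hT
  set TP := Matrix.toEuclideanCLM (𝕜 := ℂ) P with hTPdef
  set TQ := Matrix.toEuclideanCLM (𝕜 := ℂ) Q with hTQdef
  have key : ∀ (x : EuclideanSpace ℂ (Fin n × Fin d)) (i : Fin n) (a : Fin d),
      (T x) (i, a) = (∑ b, Q a b * x (i, b)) + ∑ b, A a b * (∑ j, x (j, b)) := by
    intro x i a
    have h1 : (T x) (i, a) = ∑ j, ∑ b, (if i = j then B a b else A a b) * x (j, b) := by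
      show M.mulVec x (i, a) = _
      simp [Matrix.mulVec, dotProduct, Fintype.sum_prod_type, hM]
    rw [h1]
    have h2 : ∀ (j : Fin n) (b : Fin d), (if i = j then B a b else A a b) * x (j, b) =
        A a b * x (j, b) + (if j = i then (B a b - A a b) * x (j, b) else 0) := by
      intro j b
      by_cases h : i = j
      · subst h; simp; ring
      · simp [h, Ne.symm h]
    rw [Finset.sum_comm]
    simp_rw [h2, Finset.sum_add_distrib, Finset.sum_ite_eq' Finset.univ i,
      Finset.mem_univ, if_true]
    rw [← Finset.sum_add_distrib]
    conv_rhs => rw [← Finset.sum_add_distrib]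
    apply Finset.sum_congr rfl
    intro b _
    simp only [hQdef, Matrix.sub_apply, Finset.mul_sum]
    ring
  have appP : ∀ (v : EuclideanSpace ℂ (Fin d)) (a : Fin d),
      (TP v) a = ∑ b, P a b * v b := fun v a => rfl
  have appQ : ∀ (v : EuclideanSpace ℂ (Fin d)) (a : Fin d),
      (TQ v) a = ∑ b, Q a b * v b := fun v a => rfl
  have hPQ : ∀ a b, P a b = Q a b + (n : ℂ) * A a b := by
    intro a b
    simp [hPdef, hQdef, Matrix.sub_apply, Matrix.add_apply]
    ring
  have hK0 : (0:ℝ) ≤ max ‖TP‖ ‖TQ‖ := le_max_of_le_left (norm_nonneg _)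
  apply le_antisymm
  · -- upper bound
    refine ContinuousLinearMap.opNorm_le_bound _ hK0 fun x => ?_
    set K := max ‖TP‖ ‖TQ‖ with hK
    set s : Fin d → ℂ := fun b => ∑ j, x (j, b) with hs
    set c : Fin d → ℂ := fun b => s b / n with hc
    set cF : EuclideanSpace ℂ (Fin d) := (WithLp.equiv 2 _).symm c with hcF
    set wF : Fin n → EuclideanSpace ℂ (Fin d) :=
      fun i => (WithLp.equiv 2 _).symm (fun b => x (i, b) - c b) with hwF
    have hwapp : ∀ i b, (wF i) b = x (i, b) - c b := fun i b => rfl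
    have hcapp : ∀ b, (cF) b = c b := fun b => rfl
    have hwsum : ∀ b, ∑ i, (wF i) b = 0 := by
      intro b
      simp_rw [hwapp, Finset.sum_sub_distrib, Finset.sum_const, Finset.card_univ,
        Fintype.card_fin, hc]
      rw [nsmul_eq_mul]
      field_simp [hs]
      exact sub_eq_zero.mpr rfl
    set U : EuclideanSpace ℂ (Fin n × Fin d) :=
      (WithLp.equiv 2 _).symm (fun p => (TP cF) p.2) with hU
    set V : EuclideanSpace ℂ (Fin n × Fin d) :=
      (WithLp.equiv 2 _).symm (fun p => (TQ (wF p.1)) p.2) with hV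
    have hUapp : ∀ i a, U (i, a) = (TP cF) a := fun i a => rfl
    have hVapp : ∀ i a, V (i, a) = (TQ (wF i)) a := fun i a => rfl
    have hVsum : ∀ a, ∑ i, V (i, a) = 0 := by
      intro a
      simp_rw [hVapp, appQ]
      rw [Finset.sum_comm]
      refine Finset.sum_eq_zero fun b _ => ?_
      rw [← Finset.mul_sum, hwsum, mul_zero]
    have hTx : T x = U + V := by
      apply PiLp.ext
      rintro ⟨i, a⟩
      have : (U + V) (i, a) = U (i, a) + V (i, a) := rfl
      rw [this, hUapp, hVapp, key, appP, appQ]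
      simp_rw [hcapp, hwapp, hPQ, ← Finset.sum_add_distrib]
      refine Finset.sum_congr rfl fun b _ => ?_
      have hsb : ∑ j : Fin n, x (j, b) = (n : ℂ) * c b := by
        simp only [hc, hs]
        field_simp
      rw [hsb]
      ring
    have hinner : (inner ℂ U V : ℂ) = 0 :=
      aux_inner_zero U V (fun a => (TP cF) a) hUapp hVsum
    set x0 : EuclideanSpace ℂ (Fin n × Fin d) :=
      (WithLp.equiv 2 _).symm (fun p : Fin n × Fin d => c p.2) with hx0
    set x1 : EuclideanSpace ℂ (Fin n × Fin d) :=
      (WithLp.equiv 2 _).symm (fun p : Fin n × Fin d => (wF p.1) p.2) with hx1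
    have hx0app : ∀ i a, x0 (i, a) = c a := fun i a => rfl
    have hx1app : ∀ i a, x1 (i, a) = (wF i) a := fun i a => rfl
    have hx1sum : ∀ a, ∑ i, x1 (i, a) = 0 := by
      intro a; simp_rw [hx1app]; exact hwsum a
    have hinner2 : (inner ℂ x0 x1 : ℂ) = 0 :=
      aux_inner_zero x0 x1 c hx0app hx1sum
    have hxdecomp : x = x0 + x1 := by
      apply PiLp.ext
      rintro ⟨i, a⟩
      show x (i, a) = c a + (x (i, a) - c a)
      ring
    have hTxsq : ‖T x‖ ^ 2 = ‖U‖ ^ 2 + ‖V‖ ^ 2 := by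
      rw [hTx, pow_two, pow_two, pow_two]
      exact norm_add_sq_eq_norm_sq_add_norm_sq_of_inner_eq_zero U V hinner
    have hxsq : ‖x‖ ^ 2 = ‖x0‖ ^ 2 + ‖x1‖ ^ 2 := by
      conv_lhs => rw [hxdecomp]
      rw [pow_two, pow_two, pow_two]
      exact norm_add_sq_eq_norm_sq_add_norm_sq_of_inner_eq_zero x0 x1 hinner2
    have hUsq : ‖U‖ ^ 2 = n * ‖TP cF‖ ^ 2 := aux_const_sq U (TP cF) hUapp
    have hVsq : ‖V‖ ^ 2 = ∑ i, ‖TQ (wF i)‖ ^ 2 :=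
      aux_slice_sq V (fun i => TQ (wF i)) hVapp
    have hcsq : ‖x0‖ ^ 2 = n * ‖cF‖ ^ 2 := aux_const_sq x0 cF hx0app
    have hwsq : ‖x1‖ ^ 2 = ∑ i, ‖wF i‖ ^ 2 := aux_slice_sq x1 wF hx1app
    have hbound : ‖T x‖ ^ 2 ≤ (K * ‖x‖) ^ 2 := by
      rw [hTxsq, hUsq, hVsq]
      have h1 : ‖TP cF‖ ^ 2 ≤ K ^ 2 * ‖cF‖ ^ 2 := by
        have h2 : ‖TP cF‖ ≤ K * ‖cF‖ :=
          (TP.le_opNorm cF).trans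
            (mul_le_mul_of_nonneg_right (le_max_left _ _) (norm_nonneg _))
        calc ‖TP cF‖ ^ 2 ≤ (K * ‖cF‖) ^ 2 := pow_le_pow_left₀ (norm_nonneg _) h2 2
          _ = K ^ 2 * ‖cF‖ ^ 2 := by ring
      have h2 : ∀ i, ‖TQ (wF i)‖ ^ 2 ≤ K ^ 2 * ‖wF i‖ ^ 2 := by
        intro i
        have h3 : ‖TQ (wF i)‖ ≤ K * ‖wF i‖ :=
          (TQ.le_opNorm (wF i)).trans
            (mul_le_mul_of_nonneg_right (le_max_right _ _) (norm_nonneg _))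
        calc ‖TQ (wF i)‖ ^ 2 ≤ (K * ‖wF i‖) ^ 2 := pow_le_pow_left₀ (norm_nonneg _) h3 2
          _ = K ^ 2 * ‖wF i‖ ^ 2 := by ring
      calc (n : ℝ) * ‖TP cF‖ ^ 2 + ∑ i, ‖TQ (wF i)‖ ^ 2
          ≤ (n : ℝ) * (K ^ 2 * ‖cF‖ ^ 2) + ∑ i, K ^ 2 * ‖wF i‖ ^ 2 := by
            refine add_le_add (mul_le_mul_of_nonneg_left h1 (by positivity))
              (Finset.sum_le_sum fun i _ => h2 i)
        _ = K ^ 2 * ((n : ℝ) * ‖cF‖ ^ 2 + ∑ i, ‖wF i‖ ^ 2) := by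
            rw [← Finset.mul_sum]; ring
        _ = K ^ 2 * ‖x‖ ^ 2 := by rw [hxsq, hcsq, hwsq]
        _ = (K * ‖x‖) ^ 2 := by ring
    exact (pow_le_pow_iff_left₀ (norm_nonneg (T x))
      (mul_nonneg hK0 (norm_nonneg x)) two_ne_zero).mp hbound
  · apply max_le
    · -- ‖TP‖ ≤ ‖T‖
      refine ContinuousLinearMap.opNorm_le_bound _ (norm_nonneg T) fun v => ?_
      set xv : EuclideanSpace ℂ (Fin n × Fin d) :=
        (WithLp.equiv 2 _).symm (fun p : Fin n × Fin d => v p.2) with hxv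
      have hxvapp : ∀ i a, xv (i, a) = v a := fun i a => rfl
      have happ : ∀ i a, (T xv) (i, a) = (TP v) a := by
        intro i a
        rw [key, appP]
        simp_rw [hxvapp, Finset.sum_const, Finset.card_univ, Fintype.card_fin,
          hPQ, ← Finset.sum_add_distrib]
        refine Finset.sum_congr rfl fun b _ => ?_
        rw [nsmul_eq_mul]
        ring
      have h1 : ‖T xv‖ ^ 2 = n * ‖TP v‖ ^ 2 := aux_const_sq (T xv) (TP v) happ
      have h2 : ‖xv‖ ^ 2 = n * ‖v‖ ^ 2 := aux_const_sq xv v hxvapp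
      have h3 : ‖T xv‖ ≤ ‖T‖ * ‖xv‖ := T.le_opNorm xv
      have h4 : (n : ℝ) * ‖TP v‖ ^ 2 ≤ (n : ℝ) * (‖T‖ * ‖v‖) ^ 2 := by
        rw [← h1]
        calc ‖T xv‖ ^ 2 ≤ (‖T‖ * ‖xv‖) ^ 2 := pow_le_pow_left₀ (norm_nonneg _) h3 2
          _ = (n : ℝ) * (‖T‖ * ‖v‖) ^ 2 := by rw [mul_pow, h2, mul_pow]; ring
      have h5 : ‖TP v‖ ^ 2 ≤ (‖T‖ * ‖v‖) ^ 2 :=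
        le_of_mul_le_mul_left h4 (by exact_mod_cast hnpos)
      exact (pow_le_pow_iff_left₀ (norm_nonneg _)
        (mul_nonneg (norm_nonneg _) (norm_nonneg _)) two_ne_zero).mp h5
    · -- ‖TQ‖ ≤ ‖T‖
      refine ContinuousLinearMap.opNorm_le_bound _ (norm_nonneg T) fun v => ?_
      set i0 : Fin n := ⟨0, by omega⟩ with hi0
      set i1 : Fin n := ⟨1, by omega⟩ with hi1
      have h01 : i0 ≠ i1 := by simp [hi0, hi1, Fin.ext_iff]
      set yv : EuclideanSpace ℂ (Fin n × Fin d) :=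
        (WithLp.equiv 2 _).symm
          (fun p => (if p.1 = i0 then v p.2 else 0) - (if p.1 = i1 then v p.2 else 0)) with hyv
      have hyapp : ∀ j b, yv (j, b) =
          (if j = i0 then v b else 0) - (if j = i1 then v b else 0) := fun j b => rfl
      have hysum : ∀ b, ∑ j, yv (j, b) = 0 := by
        intro b
        simp_rw [hyapp, Finset.sum_sub_distrib,
          Finset.sum_ite_eq' Finset.univ i0 (fun _ => v b),
          Finset.sum_ite_eq' Finset.univ i1 (fun _ => v b)]
        simp
      have happ : ∀ i a, (T yv) (i, a) =
          (if i = i0 then (TQ v) a else 0) - (if i = i1 then (TQ v) a else 0) := by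
        intro i a
        rw [key]
        simp_rw [hysum, mul_zero, Finset.sum_const_zero, add_zero]
        by_cases h0 : i = i0
        · subst h0
          simp [hyapp, h01, appQ]
        · by_cases h1 : i = i1
          · subst h1
            simp [hyapp, h0, appQ, mul_neg, Finset.sum_neg_distrib]
          · simp [hyapp, h0, h1]
      have h1 : ‖T yv‖ ^ 2 = 2 * ‖TQ v‖ ^ 2 := aux_two_sq i0 i1 h01 (TQ v) (T yv) happ
      have h2 : ‖yv‖ ^ 2 = 2 * ‖v‖ ^ 2 := aux_two_sq i0 i1 h01 v yv hyapp
      have h3 : ‖T yv‖ ≤ ‖T‖ * ‖yv‖ := T.le_opNorm yv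
      have h4 : (2 : ℝ) * ‖TQ v‖ ^ 2 ≤ (2 : ℝ) * (‖T‖ * ‖v‖) ^ 2 := by
        rw [← h1]
        calc ‖T yv‖ ^ 2 ≤ (‖T‖ * ‖yv‖) ^ 2 := pow_le_pow_left₀ (norm_nonneg _) h3 2
          _ = (2 : ℝ) * (‖T‖ * ‖v‖) ^ 2 := by rw [mul_pow, h2, mul_pow]; ring
      have h5 : ‖TQ v‖ ^ 2 ≤ (‖T‖ * ‖v‖) ^ 2 :=
        le_of_mul_le_mul_left h4 (by norm_num)
      exact (pow_le_pow_iff_left₀ (norm_nonneg _)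
        (mul_nonneg (norm_nonneg _) (norm_nonneg _)) two_ne_zero).mp h5
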